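/- Fix ε > 0, a_ε = (√(1+4ε) − 1)/2, μ_ε(s) = max{s(1−s)+ε, ε}, and let f_ε be the regularized potential. Then there exists a constant c_ε ≥ 0, depending only on ε, such that f_ε(s) ≥ s²/(2ε) − c_ε for every s ∈ ℝ. -/

import Mathlib

/-- quadratic lower bound `f_ε(s) ≥ s²/(2ε) − c_ε`. -/
theorem regularized_potential_quadratic_lower_bound (ε : ℝ) (hε : 0 < ε)
    (aε : ℝ) (haε : aε = (Real.sqrt (1 + 4 * ε) - 1) / 2)
    (με : ℝ → ℝ) (hμε : ∀ s : ℝ, με s = max (s * (1 - s) + ε) ε)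
    (fε : ℝ → ℝ) (hreg : ContDiff ℝ 2 fε)
    (hf'' : ∀ s : ℝ, deriv (deriv fε) s = (1 + 2 * aε) / με s)
    (hf' : deriv fε (1/2) = 0) (hf : fε (1/2) = - Real.log 2) :
    ∃ c : ℝ, 0 ≤ c ∧ ∀ s : ℝ, s ^ 2 / (2 * ε) - c ≤ fε s := by
  have hsq : 1 < Real.sqrt (1 + 4 * ε) := by
    have h1 : (1:ℝ) < 1 + 4 * ε := by linarith
    calc (1:ℝ) = Real.sqrt 1 := Real.sqrt_one.symm
      _ < _ := Real.sqrt_lt_sqrt (by norm_num) h1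
  have ha0 : 0 < aε := by rw [haε]; linarith
  obtain ⟨K, hK⟩ : ∃ K : ℝ, K = (1 + 2 * aε) / ε := ⟨_, rfl⟩
  have hK0 : 0 < K := by rw [hK]; exact div_pos (by linarith) hε
  obtain ⟨P, hP⟩ : ∃ P : ℝ, P = (5 / 4) * K := ⟨_, rfl⟩
  have hP0 : 0 < P := by rw [hP]; positivity
  -- the comparison function and its derivatives
  obtain ⟨G, hG⟩ : ∃ G : ℝ → ℝ, G = fun s => K * (s - 1/2) ^ 2 / 2
      - P * ((s - 1/2) * Real.arctan (s - 1/2) - Real.log (1 + (s - 1/2) ^ 2) / 2)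
      - Real.log 2 := ⟨_, rfl⟩
  obtain ⟨G1, hG1⟩ : ∃ G1 : ℝ → ℝ,
      G1 = fun s => K * (s - 1/2) - P * Real.arctan (s - 1/2) := ⟨_, rfl⟩
  obtain ⟨G2, hG2⟩ : ∃ G2 : ℝ → ℝ,
      G2 = fun s => K - P / (1 + (s - 1/2) ^ 2) := ⟨_, rfl⟩
  have hx1 : ∀ s : ℝ, HasDerivAt (fun t : ℝ => t - 1/2) 1 s := fun s =>
    (hasDerivAt_id s).sub_const _
  have hpos : ∀ s : ℝ, (0:ℝ) < 1 + (s - 1/2) ^ 2 := fun s => by positivity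
  have hGderiv : ∀ s : ℝ, HasDerivAt G (G1 s) s := by
    intro s
    have harct : HasDerivAt (fun t : ℝ => Real.arctan (t - 1/2))
        (1 / (1 + (s - 1/2) ^ 2) * 1) s :=
      (Real.hasDerivAt_arctan (s - 1/2)).comp (h := fun t : ℝ => t - 1/2) s (hx1 s)
    have hsq' : HasDerivAt (fun t : ℝ => K * (t - 1/2) ^ 2 / 2) (K * (s - 1/2)) s := by
      have h := (((hx1 s).fun_pow 2).const_mul K).div_const 2
      refine h.congr_deriv ?_
      ring
    have hmul : HasDerivAt (fun t : ℝ => (t - 1/2) * Real.arctan (t - 1/2))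
        (1 * Real.arctan (s - 1/2) + (s - 1/2) * (1 / (1 + (s - 1/2) ^ 2) * 1)) s :=
      (hx1 s).mul harct
    have hinner : HasDerivAt (fun t : ℝ => 1 + (t - 1/2) ^ 2) (2 * (s - 1/2)) s := by
      have h := ((hx1 s).fun_pow 2).const_add 1
      refine h.congr_deriv ?_
      ring
    have hlog : HasDerivAt (fun t : ℝ => Real.log (1 + (t - 1/2) ^ 2) / 2)
        ((1 + (s - 1/2) ^ 2)⁻¹ * (2 * (s - 1/2)) / 2) s :=
      ((Real.hasDerivAt_log (ne_of_gt (hpos s))).comp (h := fun t : ℝ => 1 + (t - 1/2) ^ 2) s hinner).div_const 2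
    have h := (hsq'.sub ((hmul.sub hlog).const_mul P)).sub_const (Real.log 2)
    rw [hG, hG1]
    refine h.congr_deriv ?_
    have h0 := ne_of_gt (hpos s)
    field_simp
    ring
  have hG1deriv : ∀ s : ℝ, HasDerivAt G1 (G2 s) s := by
    intro s
    have harct : HasDerivAt (fun t : ℝ => Real.arctan (t - 1/2))
        (1 / (1 + (s - 1/2) ^ 2) * 1) s :=
      (Real.hasDerivAt_arctan (s - 1/2)).comp (h := fun t : ℝ => t - 1/2) s (hx1 s)
    have h := ((hx1 s).const_mul K).sub (harct.const_mul P)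
    rw [hG1, hG2]
    refine h.congr_deriv ?_
    ring
  -- fε facts
  have hfd : Differentiable ℝ fε := hreg.differentiable (by norm_num)
  have hfd2 : Differentiable ℝ (deriv fε) := by
    have h2 : ContDiff ℝ ((1:ℕ) + 1) fε := by exact_mod_cast hreg
    exact ((contDiff_succ_iff_deriv.mp h2).2.2).differentiable (by norm_num)
  -- key inequality : G2 ≤ f''
  have hkey : ∀ s : ℝ, G2 s ≤ deriv (deriv fε) s := by
    intro s
    rw [hf'' s, hμε s, hG2]
    rcases le_or_gt (s * (1 - s)) 0 with hc | hc
    · rw [max_eq_right (by linarith), ← hK]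
      have : 0 ≤ P / (1 + (s - 1/2) ^ 2) := le_of_lt (div_pos hP0 (hpos s))
      linarith
    · have hxlt : (s - 1/2) ^ 2 < 1/4 := by nlinarith
      have h1 : K ≤ P / (1 + (s - 1/2) ^ 2) := by
        rw [le_div_iff₀ (hpos s), hP]
        nlinarith [hK0.le]
      have h2 : (0:ℝ) ≤ (1 + 2 * aε) / max (s * (1 - s) + ε) ε := by
        apply div_nonneg (by linarith)
        exact le_trans hε.le (le_max_right _ _)
      linarith
  -- D = fε - G has a global minimum 0 at 1/2
  obtain ⟨D, hD⟩ : ∃ D : ℝ → ℝ, D = fun s => fε s - G s := ⟨_, rfl⟩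
  obtain ⟨D1, hD1⟩ : ∃ D1 : ℝ → ℝ, D1 = fun s => deriv fε s - G1 s := ⟨_, rfl⟩
  have hDderiv : ∀ s : ℝ, HasDerivAt D (D1 s) s := by
    intro s; rw [hD, hD1]
    exact ((hfd s).hasDerivAt).sub (hGderiv s)
  have hD1deriv : ∀ s : ℝ, HasDerivAt D1 (deriv (deriv fε) s - G2 s) s := by
    intro s; rw [hD1]
    exact ((hfd2 s).hasDerivAt).sub (hG1deriv s)
  have hD1mono : Monotone D1 :=
    monotone_of_hasDerivAt_nonneg hD1deriv (fun s => sub_nonneg.mpr (hkey s))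
  have hG1half : G1 (1/2) = 0 := by
    rw [hG1]; norm_num
  have hD1half : D1 (1/2) = 0 := by
    rw [hD1]; simp only [hf', hG1half]; ring
  have hGhalf : G (1/2) = - Real.log 2 := by
    rw [hG]; norm_num
  have hDhalf : D (1/2) = 0 := by
    rw [hD]; simp only [hf, hGhalf]; ring
  have hDnonneg : ∀ s : ℝ, 0 ≤ D s := by
    intro s
    rcases le_total (1/2 : ℝ) s with hs | hs
    · have hmono : MonotoneOn D (Set.Ici (1/2 : ℝ)) := by
        apply monotoneOn_of_hasDerivWithinAt_nonneg (convex_Ici _)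
          (fun t _ => (hDderiv t).continuousAt.continuousWithinAt)
          (fun t _ => (hDderiv t).hasDerivWithinAt)
        intro t ht
        rw [interior_Ici] at ht
        have h := hD1mono (le_of_lt ht)
        rw [hD1half] at h
        exact h
      have h := hmono Set.self_mem_Ici hs hs
      rw [hDhalf] at h; exact h
    · have hanti : AntitoneOn D (Set.Iic (1/2 : ℝ)) := by
        apply antitoneOn_of_hasDerivWithinAt_nonpos (convex_Iic _)
          (fun t _ => (hDderiv t).continuousAt.continuousWithinAt)
          (fun t _ => (hDderiv t).hasDerivWithinAt)
        intro t ht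
        rw [interior_Iic] at ht
        have h := hD1mono (le_of_lt ht)
        rw [hD1half] at h
        exact h
      have h := hanti hs Set.self_mem_Iic hs
      rw [hDhalf] at h; exact h
  -- lower bound for G
  obtain ⟨α, hα⟩ : ∃ α : ℝ, α = aε / ε := ⟨_, rfl⟩
  have hα0 : 0 < α := by rw [hα]; positivity
  obtain ⟨β, hβ⟩ : ∃ β : ℝ, β = 1 / (2 * ε) + P * Real.pi / 2 := ⟨_, rfl⟩
  have hβ0 : 0 < β := by
    rw [hβ]
    have := Real.pi_pos
    positivity
  obtain ⟨c, hc⟩ : ∃ c : ℝ, c = β ^ 2 / (4 * α) + 1 / (8 * ε) + Real.log 2 := ⟨_, rfl⟩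
  refine ⟨c, ?_, ?_⟩
  · rw [hc]
    have h3 : 0 ≤ Real.log 2 := Real.log_nonneg one_le_two
    positivity
  · intro s
    have hDs : G s ≤ fε s := by
      have h := hDnonneg s
      rw [hD] at h
      have h' : 0 ≤ fε s - G s := h
      linarith
    obtain ⟨x, hx⟩ : ∃ x : ℝ, x = s - 1/2 := ⟨_, rfl⟩
    obtain ⟨t, ht⟩ : ∃ t : ℝ, t = |x| := ⟨_, rfl⟩
    have hb1 : x ≤ t := ht ▸ le_abs_self x
    have hb3 : x ^ 2 = t ^ 2 := by rw [ht, sq_abs]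
    have ht0 : 0 ≤ t := ht ▸ abs_nonneg x
    -- arctan bound
    have harc : x * Real.arctan x - Real.log (1 + x ^ 2) / 2 ≤ Real.pi / 2 * t := by
      have h1 : x * Real.arctan x ≤ Real.pi / 2 * t := by
        calc x * Real.arctan x ≤ |x * Real.arctan x| := le_abs_self _
          _ = |x| * |Real.arctan x| := abs_mul _ _
          _ ≤ |x| * (Real.pi / 2) := by
              apply mul_le_mul_of_nonneg_left _ (abs_nonneg x)
              exact abs_le.mpr ⟨le_of_lt (Real.neg_pi_div_two_lt_arctan x),
                le_of_lt (Real.arctan_lt_pi_div_two x)⟩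
          _ = Real.pi / 2 * t := by rw [ht]; ring
      have h2 : 0 ≤ Real.log (1 + x ^ 2) := Real.log_nonneg (by nlinarith)
      linarith
    have hGs : K * x ^ 2 / 2 - P * (Real.pi / 2 * t) - Real.log 2 ≤ G s := by
      simp only [hG]
      rw [← hx]
      have := mul_le_mul_of_nonneg_left harc hP0.le
      linarith
    -- algebraic identities (denominators cleared via opaque atoms)
    have hKx : K * x ^ 2 / 2 = x ^ 2 / (2 * ε) + α * x ^ 2 := by
      rw [hK, hα]; field_simp
    have hexp : s ^ 2 / (2 * ε) = x ^ 2 / (2 * ε) + x / (2 * ε) + 1 / (8 * ε) := by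
      have hs2 : s = x + 1/2 := by rw [hx]; ring
      rw [hs2]; field_simp; ring
    have hquad : 0 ≤ α * t ^ 2 - β * t + β ^ 2 / (4 * α) := by
      have hid : α * t ^ 2 - β * t + β ^ 2 / (4 * α) = (2 * α * t - β) ^ 2 / (4 * α) := by
        field_simp; ring
      rw [hid]
      positivity
    have hβt : β * t = 1 / (2 * ε) * t + P * Real.pi / 2 * t := by rw [hβ]; ring
    have hxt : x / (2 * ε) ≤ 1 / (2 * ε) * t := by
      have h1 : (0:ℝ) < 1 / (2 * ε) := by positivity
      calc x / (2 * ε) = 1 / (2 * ε) * x := by ring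
        _ ≤ 1 / (2 * ε) * t := mul_le_mul_of_nonneg_left hb1 h1.le
    have hαx : α * x ^ 2 = α * t ^ 2 := by rw [hb3]
    have hPt : P * (Real.pi / 2 * t) = P * Real.pi / 2 * t := by ring
    rw [hc]
    linarith only [hquad, hβt, hxt, hαx, hKx, hexp, hGs, hDs, hPt]
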